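/- arXiv:math/0702803 — 4 statements merged into one kernel-verified Lean document; each statement's English description precedes it below -/
import Mathlib

section
/- Let k, l ≥ 1, let p_1,…,p_l : ℂ^k → ℂ be homogeneous polynomials of positive degrees, and let Z ⊆ ℂ^k be their common zero set. Let V ⊆ ℂ^k be a closed subset with the property that for every sequence (w_j) in V with ‖w_j‖ → ∞ for which the normalized sequence w_j/‖w_j‖ converges to some v ∈ ℂ^k, one has v ∉ Z. Then the restriction to V of the map M := (p_1,…,p_l) : ℂ^k → ℂ^l is a proper map V → ℂ^l. -/
open MvPolynomial Filter Topology

lemma my_eval_smul {σ : Type*} {φ : MvPolynomial σ ℂ} {n : ℕ}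
    (h : φ.IsHomogeneous n) (c : ℂ) (x : σ → ℂ) :
    eval (c • x) φ = c ^ n * eval x φ := by
  rw [eval_eq, eval_eq, Finset.mul_sum]
  apply Finset.sum_congr rfl
  intro m hm
  have hdeg : ∑ i ∈ m.support, m i = n := by
    have := h (mem_support_iff.mp hm)
    rw [← this, Finsupp.weight_apply]
    simp [Finsupp.sum, mul_comm]
  calc coeff m φ * ∏ i ∈ m.support, (c • x) i ^ m i
      = coeff m φ * ∏ i ∈ m.support, (c ^ m i * x i ^ m i) := by
        simp [mul_pow]
    _ = c ^ n * (coeff m φ * ∏ i ∈ m.support, x i ^ m i) := by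
        rw [Finset.prod_mul_distrib, Finset.prod_pow_eq_pow_sum, hdeg]; ring

/-- **Lemma 5.2.** Let `p₁,…,p_l` be homogeneous polynomials on `ℂ^k` of positive
degrees with common zero set `Z`, and let `V ⊆ ℂ^k` be a closed set such that every
limit direction at infinity of `V` avoids `Z` (i.e. if `(w_j) ⊆ V`, `‖w_j‖ → ∞` and
`w_j/‖w_j‖ → v`, then `v ∉ Z`).  Then the restriction to `V` of
`M = (p₁,…,p_l) : ℂ^k → ℂ^l` is proper: for every compact `K ⊆ ℂ^l` the set
`{w ∈ V : M w ∈ K}` is compact. -/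
theorem homogeneous_map_restriction_proper
    (k l : ℕ) (hk : 1 ≤ k) (hl : 1 ≤ l)
    (p : Fin l → MvPolynomial (Fin k) ℂ) (d : Fin l → ℕ)
    (hd : ∀ i, 0 < d i) (hhom : ∀ i, (p i).IsHomogeneous (d i))
    (Z : Set (Fin k → ℂ)) (hZ : Z = {w : Fin k → ℂ | ∀ i, eval w (p i) = 0})
    (V : Set (Fin k → ℂ)) (hVclosed : IsClosed V)
    (hdir : ∀ w : ℕ → (Fin k → ℂ), (∀ j, w j ∈ V) →
      Tendsto (fun j => ‖w j‖) atTop atTop →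
      ∀ v : Fin k → ℂ, Tendsto (fun j => (‖w j‖)⁻¹ • w j) atTop (𝓝 v) → v ∉ Z) :
    ∀ K : Set (Fin l → ℂ), IsCompact K →
      IsCompact {w : Fin k → ℂ | w ∈ V ∧ (fun i => eval w (p i)) ∈ K} := by
  intro K hK
  set M : (Fin k → ℂ) → (Fin l → ℂ) := fun w i => eval w (p i) with hM
  have hMcont : Continuous M := continuous_pi fun i => (p i).continuous_eval
  set S : Set (Fin k → ℂ) := {w | w ∈ V ∧ M w ∈ K} with hS
  have hSclosed : IsClosed S :=
    hVclosed.inter (hK.isClosed.preimage hMcont)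
  rw [Metric.isCompact_iff_isClosed_bounded]
  refine ⟨hSclosed, ?_⟩
  by_contra hb
  rw [isBounded_iff_forall_norm_le] at hb
  push_neg at hb
  have hseq : ∀ n : ℕ, ∃ x, x ∈ S ∧ (n : ℝ) < ‖x‖ := by
    intro n
    obtain ⟨x, hx, hxn⟩ := hb n
    exact ⟨x, hx, hxn⟩
  choose w hwS hwn using hseq
  have hwpos : ∀ j, 0 < ‖w j‖ := fun j => lt_of_le_of_lt (Nat.cast_nonneg j) (hwn j)
  have hnorm : Tendsto (fun j => ‖w j‖) atTop atTop :=
    tendsto_atTop_mono (fun n => (hwn n).le) tendsto_natCast_atTop_atTop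
  set u : ℕ → (Fin k → ℂ) := fun j => (‖w j‖)⁻¹ • w j with hu
  have humem : ∀ j, u j ∈ Metric.sphere (0 : Fin k → ℂ) 1 := by
    intro j
    rw [mem_sphere_zero_iff_norm, hu, norm_smul, norm_inv, norm_norm,
      inv_mul_cancel₀ (hwpos j).ne']
  obtain ⟨v, hvmem, φ, hφmono, hφtend⟩ :=
    (isCompact_sphere (0 : Fin k → ℂ) 1).tendsto_subseq humem
  have hvZ : v ∉ Z := by
    refine hdir (fun j => w (φ j)) (fun j => (hwS (φ j)).1)
      (hnorm.comp hφmono.tendsto_atTop) v ?_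
    exact hφtend
  rw [hZ] at hvZ
  simp only [Set.mem_setOf_eq, not_forall] at hvZ
  obtain ⟨i, hi⟩ := hvZ
  -- bound on K
  obtain ⟨C, hC⟩ := isBounded_iff_forall_norm_le.mp hK.isBounded
  have hbound : ∀ j, ‖M (w (φ j)) i‖ ≤ C := fun j =>
    le_trans (norm_le_pi_norm _ i) (hC _ (hwS (φ j)).2)
  -- homogeneity identity
  have hident : ∀ j, ‖M (w j) i‖ = ‖w j‖ ^ (d i) * ‖eval (u j) (p i)‖ := by
    intro j
    have hw : ((‖w j‖ : ℂ)) • u j = w j := by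
      show (‖w j‖ : ℂ) • ((‖w j‖)⁻¹ • w j) = w j
      rw [Complex.coe_smul, smul_smul, mul_inv_cancel₀ (hwpos j).ne', one_smul]
    have h1 : eval ((‖w j‖ : ℂ) • u j) (p i) = (‖w j‖ : ℂ) ^ (d i) * eval (u j) (p i) :=
      my_eval_smul (hhom i) _ _
    rw [hw] at h1
    show ‖eval (w j) (p i)‖ = _
    rw [h1, norm_mul, norm_pow, Complex.norm_real, Real.norm_eq_abs,
      abs_of_pos (hwpos j)]
  -- the product tends to infinity
  have hcont : Continuous fun x => ‖eval x (p i)‖ := (p i).continuous_eval.norm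
  have hlim2 : Tendsto (fun j => ‖eval (u (φ j)) (p i)‖) atTop (𝓝 ‖eval v (p i)‖) :=
    (hcont.tendsto v).comp hφtend
  have hpos : 0 < ‖eval v (p i)‖ := norm_pos_iff.mpr hi
  have hlim1 : Tendsto (fun j => ‖w (φ j)‖ ^ (d i)) atTop atTop :=
    (tendsto_pow_atTop (hd i).ne').comp (hnorm.comp hφmono.tendsto_atTop)
  have hprod : Tendsto (fun j => ‖w (φ j)‖ ^ (d i) * ‖eval (u (φ j)) (p i)‖)
      atTop atTop := hlim1.atTop_mul_pos hpos hlim2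
  obtain ⟨j, hj⟩ := (hprod.eventually_gt_atTop C).exists
  rw [← hident (φ j)] at hj
  exact absurd (hbound j) (not_le.mpr hj)
end

section
/- Fix a real number T > 0 and an integer n ≥ 1, and let a = (a_1,…,a_n) be a tuple of continuous functions [0,T] → ℂ. If every basic iterated integral of a vanishes, i.e., I_{i_1,…,i_m}(a) = 0 for every m ≥ 1 and all indices i_1,…,i_m ∈ {1,…,n}, then the equation E(a) determines a center. -/
open MeasureTheory Set Filter Topology
open scoped Interval

noncomputable section

/-- Iterated integral over the simplex `0 ≤ s₁ ≤ … ≤ s_m ≤ x`; the head of the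
list is attached to the outermost (largest) variable. -/
def simplexInt : List (ℝ → ℂ) → ℝ → ℂ
  | [] => fun _ => 1
  | f :: fs => fun x => ∫ s in (0:ℝ)..x, f s * simplexInt fs s

/-- The basic iterated integral `I_{i₁,…,i_m}(a)`. -/
def iterInt (T : ℝ) {n : ℕ} (a : Fin n → ℝ → ℂ) (l : List (Fin n)) : ℂ :=
  simplexInt ((l.map a).reverse) T

/-- `ã(x) = ∫_0^x a(s) ds`. -/
def primitive (a : ℝ → ℂ) (x : ℝ) : ℂ := ∫ s in (0:ℝ)..x, a s

/-- The moment `m^{n₁,…,n_j}_{i₁,…,i_{j+1}}(a)`, encoded by the list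
`ps = [(i₁,n₁),…,(i_j,n_j)]` of index/exponent pairs and the final index `i`. -/
def moment (T : ℝ) {n : ℕ} (a : Fin n → ℝ → ℂ) (ps : List (Fin n × ℕ)) (i : Fin n) : ℂ :=
  ∫ s in (0:ℝ)..T, (ps.map fun q => primitive (a q.1) s ^ q.2).prod * a i s

/-- A function is admissible if on `[0,T]` it is a polynomial in `x`
or a finite linear combination of the exponentials `e^{2πijx/T}`, `j ∈ ℤ`. -/
def Admissible (T : ℝ) (f : ℝ → ℂ) : Prop :=
  (∃ p : Polynomial ℂ, ∀ x ∈ Icc (0:ℝ) T, f x = p.eval (x : ℂ)) ∨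
  (∃ (s : Finset ℤ) (c : ℤ → ℂ), ∀ x ∈ Icc (0:ℝ) T,
    f x = ∑ j ∈ s, c j * Complex.exp (2 * (Real.pi : ℂ) * Complex.I * (j : ℂ) * (x : ℂ) / (T : ℂ)))

/-- The equation `dv/dx = Σ_{i=1}^n a_i(x) v^{i+1}` determines a center. -/
def DeterminesCenter (T : ℝ) {n : ℕ} (a : Fin n → ℝ → ℂ) : Prop :=
  ∃ ε > (0:ℝ), ∀ v : ℝ → ℂ,
    (∀ x ∈ Icc (0:ℝ) T, v x = v 0 + ∫ s in (0:ℝ)..x, ∑ i, a i s * v s ^ ((i : ℕ) + 2)) →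
    ‖v 0‖ < ε → v T = v 0

lemma list_sum_apply' {α : Type*} (l : List α) (f : α → ℝ → ℂ) (x : ℝ) :
    (l.map f).sum x = (l.map (fun a => f a x)).sum := by
  induction l with
  | nil => rfl
  | cons a l ih => simp only [List.map_cons, List.sum_cons, Pi.add_apply, ih]

namespace UCC

variable {n : ℕ} (b : Fin n → ℝ → ℂ)

/-- `P b w` is the iterated integral function of the word `w`. -/
def P (w : List (Fin n)) : ℝ → ℂ := simplexInt (w.map b)

lemma P_nil : P b ([] : List (Fin n)) = fun _ => 1 := rfl

lemma P_cons (i : Fin n) (w : List (Fin n)) :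
    P b (i :: w) = fun x => ∫ s in (0:ℝ)..x, b i s * P b w s := rfl

lemma P_cons_zero (i : Fin n) (w : List (Fin n)) : P b (i :: w) 0 = 0 := by
  simp [P_cons]

/-- shuffles of two lists -/
def shuffles {α : Type*} : List α → List α → List (List α)
  | [], w => [w]
  | u, [] => [u]
  | x :: u, y :: w =>
      ((shuffles u (y :: w)).map (x :: ·)) ++ ((shuffles (x :: u) w).map (y :: ·))
  termination_by u w => u.length + w.length

lemma shuffles_nil_left {α : Type*} (w : List α) : shuffles [] w = [w] := by
  cases w <;> simp [shuffles]

lemma shuffles_nil_right {α : Type*} (u : List α) : shuffles u [] = [u] := by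
  cases u <;> simp [shuffles]

lemma shuffles_cons_cons {α : Type*} (x y : α) (u w : List α) :
    shuffles (x :: u) (y :: w) =
      ((shuffles u (y :: w)).map (x :: ·)) ++ ((shuffles (x :: u) w).map (y :: ·)) := by
  simp [shuffles]

variable (hb : ∀ i, Continuous (b i))

include hb

lemma contP : ∀ w : List (Fin n), Continuous (P b w) := by
  intro w
  induction w with
  | nil => exact continuous_const
  | cons i w ih =>
    rw [P_cons]
    exact intervalIntegral.continuous_primitive
      (fun a c => (((hb i).mul ih)).intervalIntegrable a c) 0

lemma hasDerivP (i : Fin n) (w : List (Fin n)) (x : ℝ) :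
    HasDerivAt (P b (i :: w)) (b i x * P b w x) x := by
  rw [P_cons]
  exact intervalIntegral.integral_hasDerivAt_right
    (((hb i).mul (contP b hb w)).intervalIntegrable 0 x)
    (((hb i).mul (contP b hb w)).stronglyMeasurableAtFilter _ _)
    ((hb i).mul (contP b hb w)).continuousAt

omit hb

lemma hasDerivAt_list_sum {α : Type*} (l : List α) (f : α → ℝ → ℂ) (f' : α → ℂ) (x : ℝ)
    (h : ∀ a ∈ l, HasDerivAt (f a) (f' a) x) :
    HasDerivAt (fun y => (l.map (fun a => f a y)).sum) ((l.map f').sum) x := by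
  induction l with
  | nil => simpa using hasDerivAt_const x (0:ℂ)
  | cons a l ih =>
    simp only [List.map_cons, List.sum_cons]
    exact (h a (by simp)).add (ih (fun a ha => h a (by simp [ha])))

include hb

lemma shuffle_mul : ∀ (u w : List (Fin n)) (x : ℝ),
    P b u x * P b w x = ((shuffles u w).map (fun s => P b s x)).sum := by
  intro u
  induction u with
  | nil => intro w x; simp [shuffles_nil_left, P_nil]
  | cons i u IHu =>
    intro w
    induction w with
    | nil => intro x; simp [shuffles_nil_right, P_nil]
    | cons j w IHw =>
      -- both sides have the same derivative and agree at 0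
      set F : ℝ → ℂ := fun x => P b (i :: u) x * P b (j :: w) x with hF
      set G : ℝ → ℂ := fun x =>
        ((shuffles (i :: u) (j :: w)).map (fun s => P b s x)).sum with hG
      have hderiv : ∀ x : ℝ, HasDerivAt (fun y => F y - G y) 0 x := by
        intro x
        have hdF : HasDerivAt F
            (b i x * P b u x * P b (j :: w) x + P b (i :: u) x * (b j x * P b w x)) x :=
          (hasDerivP b hb i u x).mul (hasDerivP b hb j w x)
        have hdG : HasDerivAt G
            (b i x * (P b u x * P b (j :: w) x) + b j x * (P b (i :: u) x * P b w x)) x := by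
          have h1 : HasDerivAt
              (fun y => ((shuffles u (j :: w)).map (fun s => P b (i :: s) y)).sum)
              (((shuffles u (j :: w)).map (fun s => b i x * P b s x)).sum) x :=
            hasDerivAt_list_sum _ _ _ x (fun s _ => hasDerivP b hb i s x)
          have h2 : HasDerivAt
              (fun y => ((shuffles (i :: u) w).map (fun s => P b (j :: s) y)).sum)
              (((shuffles (i :: u) w).map (fun s => b j x * P b s x)).sum) x :=
            hasDerivAt_list_sum _ _ _ x (fun s _ => hasDerivP b hb j s x)
          have := h1.add h2
          rw [List.sum_map_mul_left, List.sum_map_mul_left, ← IHu (j :: w) x, ← IHw x] at this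
          convert this using 2
          case e'_4 => rfl
          rw [hG]
          simp [shuffles_cons_cons, List.map_append, List.map_map, List.sum_append,
            Function.comp_def]
          rfl
        have heq : (b i x * P b u x * P b (j :: w) x + P b (i :: u) x * (b j x * P b w x))
            - (b i x * (P b u x * P b (j :: w) x) + b j x * (P b (i :: u) x * P b w x)) = 0 := by
          ring
        have hsub := hdF.sub hdG
        rw [heq] at hsub
        exact hsub
      have hconst : ∀ x y : ℝ, F x - G x = F y - G y := by
        apply is_const_of_deriv_eq_zero
        · exact fun x => (hderiv x).differentiableAt
        · exact fun x => (hderiv x).deriv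
      intro x
      have h0 : F 0 - G 0 = 0 := by
        have hF0 : F 0 = 0 := by simp [hF, P_cons_zero]
        have hG0 : G 0 = 0 := by
          rw [hG]
          simp only [shuffles_cons_cons, List.map_append, List.map_map]
          rw [List.sum_append]
          have : ∀ (z : Fin n) (L : List (List (Fin n))),
              ((L.map ((fun s => P b s 0) ∘ (z :: ·)))).sum = 0 := by
            intro z L
            induction L with
            | nil => simp
            | cons s L ih => simp [Function.comp, P_cons_zero, ih]
          rw [this, this, add_zero]
        rw [hF0, hG0, sub_zero]
      have hx : F x - G x = 0 := by rw [hconst x 0, h0]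
      exact sub_eq_zero.mp hx

omit hb

/-- span of all word functions -/
def M0 : Submodule ℂ (ℝ → ℂ) := Submodule.span ℂ (Set.range (P b))

/-- span of nonempty word functions -/
def M1 : Submodule ℂ (ℝ → ℂ) := Submodule.span ℂ (P b '' {w | w ≠ []})

lemma M1_le_M0 : M1 b ≤ M0 b :=
  Submodule.span_mono (by rintro _ ⟨w, -, rfl⟩; exact ⟨w, rfl⟩)

include hb

lemma contM0 : ∀ F ∈ M0 b, Continuous F := by
  intro F hF
  induction hF using Submodule.span_induction with
  | mem F hF => obtain ⟨w, rfl⟩ := hF; exact contP b hb w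
  | zero => exact continuous_const
  | add F G _ _ hF hG => exact hF.add hG
  | smul c F _ hF => exact hF.const_smul c

lemma mul_mem_M0 {F G : ℝ → ℂ} (hF : F ∈ M0 b) (hG : G ∈ M0 b) : F * G ∈ M0 b := by
  induction hF using Submodule.span_induction with
  | mem F hF =>
    obtain ⟨u, rfl⟩ := hF
    induction hG using Submodule.span_induction with
    | mem G hG =>
      obtain ⟨w, rfl⟩ := hG
      have : P b u * P b w = ((shuffles u w).map (P b)).sum := by
        funext x
        rw [list_sum_apply']
        exact shuffle_mul b hb u w x
      rw [this]
      exact list_sum_mem (fun f hf => by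
        obtain ⟨s, _, rfl⟩ := List.mem_map.mp hf
        exact Submodule.subset_span ⟨s, rfl⟩)
    | zero => rw [mul_zero]; exact (M0 b).zero_mem
    | add G G' _ _ h1 h2 => rw [mul_add]; exact (M0 b).add_mem h1 h2
    | smul c G _ h1 => rw [mul_smul_comm]; exact (M0 b).smul_mem c h1
  | zero => rw [zero_mul]; exact (M0 b).zero_mem
  | add F F' _ _ h1 h2 => rw [add_mul]; exact (M0 b).add_mem h1 h2
  | smul c F _ h1 => rw [smul_mul_assoc]; exact (M0 b).smul_mem c h1

omit hb in
lemma one_mem_M0 : (1 : ℝ → ℂ) ∈ M0 b :=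
  Submodule.subset_span ⟨[], rfl⟩

lemma pow_mem_M0 {F : ℝ → ℂ} (hF : F ∈ M0 b) : ∀ k : ℕ, F ^ k ∈ M0 b := by
  intro k
  induction k with
  | zero => rw [pow_zero]; exact one_mem_M0 b
  | succ k ih => rw [pow_succ]; exact mul_mem_M0 b hb ih hF

lemma primInt_mem (i : Fin n) {F : ℝ → ℂ} (hF : F ∈ M0 b) :
    (fun x => ∫ s in (0:ℝ)..x, b i s * F s) ∈ M1 b := by
  induction hF using Submodule.span_induction with
  | mem F hF =>
    obtain ⟨w, rfl⟩ := hF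
    exact Submodule.subset_span ⟨i :: w, List.cons_ne_nil i w, (P_cons b i w).symm⟩
  | zero =>
    have : (fun x => ∫ s in (0:ℝ)..x, b i s * (0 : ℝ → ℂ) s) = (0 : ℝ → ℂ) := by
      funext x; simp
    rw [this]; exact (M1 b).zero_mem
  | add F G hFm hGm h1 h2 =>
    have hcF : Continuous F := contM0 b hb F hFm
    have hcG : Continuous G := contM0 b hb G hGm
    have : (fun x => ∫ s in (0:ℝ)..x, b i s * (F + G) s)
        = (fun x => ∫ s in (0:ℝ)..x, b i s * F s) + (fun x => ∫ s in (0:ℝ)..x, b i s * G s) := by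
      funext x
      simp only [Pi.add_apply, mul_add]
      exact intervalIntegral.integral_add (((hb i).mul hcF).intervalIntegrable 0 x)
        (((hb i).mul hcG).intervalIntegrable 0 x)
    rw [this]; exact (M1 b).add_mem h1 h2
  | smul c F hFm h1 =>
    have : (fun x => ∫ s in (0:ℝ)..x, b i s * (c • F) s)
        = c • (fun x => ∫ s in (0:ℝ)..x, b i s * F s) := by
      funext x
      simp only [Pi.smul_apply, smul_eq_mul, Pi.smul_apply]
      rw [← intervalIntegral.integral_const_mul]
      congr 1; funext s; ring
    rw [this]; exact (M1 b).smul_mem c h1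

omit hb

lemma M1_eval_eq_zero {T : ℝ} (hPT : ∀ w : List (Fin n), w ≠ [] → P b w T = 0)
    {F : ℝ → ℂ} (hF : F ∈ M1 b) : F T = 0 := by
  induction hF using Submodule.span_induction with
  | mem F hF => obtain ⟨w, hw, rfl⟩ := hF; exact hPT w hw
  | zero => rfl
  | add F G _ _ h1 h2 => simp [Pi.add_apply, h1, h2]
  | smul c F _ h1 => simp [Pi.smul_apply, h1]

/-- Picard iterates -/
def picard (c : ℂ) : ℕ → ℝ → ℂ
  | 0 => fun _ => c
  | k+1 => fun x => c + ∫ s in (0:ℝ)..x, ∑ i, b i s * picard c k s ^ ((i : ℕ) + 2)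

omit hb in
lemma picard_zero (c : ℂ) : picard b c 0 = fun _ => c := rfl

omit hb in
lemma picard_succ (c : ℂ) (k : ℕ) :
    picard b c (k+1)
      = fun x => c + ∫ s in (0:ℝ)..x, ∑ i, b i s * picard b c k s ^ ((i : ℕ) + 2) := rfl

include hb

lemma picard_cont (c : ℂ) : ∀ k, Continuous (picard b c k) := by
  intro k
  induction k with
  | zero => exact continuous_const
  | succ k ih =>
    show Continuous fun x => c + ∫ s in (0:ℝ)..x, ∑ i, b i s * picard b c k s ^ ((i : ℕ) + 2)
    refine continuous_const.add ?_
    refine intervalIntegral.continuous_primitive (fun a d => ?_) 0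
    exact (continuous_finset_sum _ fun i _ => (hb i).mul (ih.pow _)).intervalIntegrable a d

lemma picard_mem (c : ℂ) : ∀ k, picard b c k ∈ M0 b := by
  intro k
  induction k with
  | zero =>
    have : picard b c 0 = c • (1 : ℝ → ℂ) := by funext x; simp [picard]
    rw [this]; exact (M0 b).smul_mem c (one_mem_M0 b)
  | succ k ih =>
    have hsplit : picard b c (k+1) = (c • (1 : ℝ → ℂ)) +
        ∑ i : Fin n, (fun x => ∫ s in (0:ℝ)..x, b i s * (picard b c k ^ ((i : ℕ) + 2)) s) := by
      funext x
      show c + (∫ s in (0:ℝ)..x, ∑ i, b i s * picard b c k s ^ ((i : ℕ) + 2)) = _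
      have : (∫ s in (0:ℝ)..x, ∑ i, b i s * picard b c k s ^ ((i : ℕ) + 2))
          = ∑ i : Fin n, ∫ s in (0:ℝ)..x, b i s * picard b c k s ^ ((i : ℕ) + 2) :=
        intervalIntegral.integral_finset_sum (fun i _ =>
          ((hb i).mul ((picard_cont b hb c k).pow _)).intervalIntegrable 0 x)
      rw [this]
      simp [Finset.sum_apply]
    rw [hsplit]
    refine (M0 b).add_mem ((M0 b).smul_mem c (one_mem_M0 b)) ?_
    refine Submodule.sum_mem _ (fun i _ => ?_)
    exact M1_le_M0 b (primInt_mem b hb i (pow_mem_M0 b hb (ih) _))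

lemma picard_T (c : ℂ) {T : ℝ} (hPT : ∀ w : List (Fin n), w ≠ [] → P b w T = 0) :
    ∀ k, picard b c k T = c := by
  intro k
  cases k with
  | zero => rfl
  | succ k =>
    show c + (∫ s in (0:ℝ)..T, ∑ i, b i s * picard b c k s ^ ((i : ℕ) + 2)) = c
    have hint : (∫ s in (0:ℝ)..T, ∑ i, b i s * picard b c k s ^ ((i : ℕ) + 2))
        = ∑ i : Fin n, ∫ s in (0:ℝ)..T, b i s * picard b c k s ^ ((i : ℕ) + 2) :=
      intervalIntegral.integral_finset_sum (fun i _ =>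
        ((hb i).mul ((picard_cont b hb c k).pow _)).intervalIntegrable 0 T)
    rw [hint]
    have : ∀ i : Fin n, (∫ s in (0:ℝ)..T, b i s * picard b c k s ^ ((i : ℕ) + 2)) = 0 := by
      intro i
      have hmem : (fun x => ∫ s in (0:ℝ)..x, b i s * (picard b c k ^ ((i : ℕ) + 2)) s) ∈ M1 b :=
        primInt_mem b hb i (pow_mem_M0 b hb (picard_mem b hb c k) _)
      have := M1_eval_eq_zero b hPT hmem
      simpa [Pi.pow_apply] using this
    simp [this]

end UCC

namespace UCC

lemma norm_pow_sub_pow_le' (p q : ℂ) (r : ℝ) (hp : ‖p‖ ≤ r) (hq : ‖q‖ ≤ r) :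
    ∀ k : ℕ, ‖p ^ (k+1) - q ^ (k+1)‖ ≤ ((k:ℝ)+1) * r ^ k * ‖p - q‖ := by
  have hr0 : 0 ≤ r := le_trans (norm_nonneg p) hp
  intro k
  induction k with
  | zero => simp
  | succ k ih =>
    have key : p ^ (k+2) - q ^ (k+2) = p * (p ^ (k+1) - q ^ (k+1)) + (p - q) * q ^ (k+1) := by
      ring
    have h1 : ‖p ^ (k+2) - q ^ (k+2)‖
        ≤ ‖p‖ * ‖p ^ (k+1) - q ^ (k+1)‖ + ‖p - q‖ * ‖q‖ ^ (k+1) := by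
      rw [key]
      exact (norm_add_le _ _).trans (by rw [norm_mul, norm_mul, norm_pow])
    have h2 : ‖p‖ * ‖p ^ (k+1) - q ^ (k+1)‖ ≤ r * (((k:ℝ)+1) * r ^ k * ‖p - q‖) :=
      mul_le_mul hp ih (norm_nonneg _) hr0
    have h3 : ‖p - q‖ * ‖q‖ ^ (k+1) ≤ ‖p - q‖ * r ^ (k+1) :=
      mul_le_mul_of_nonneg_left (pow_le_pow_left₀ (norm_nonneg _) hq _) (norm_nonneg _)
    calc ‖p ^ (k+2) - q ^ (k+2)‖
        ≤ r * (((k:ℝ)+1) * r ^ k * ‖p - q‖) + ‖p - q‖ * r ^ (k+1) := by linarith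
      _ = ((k:ℝ)+2) * r ^ (k+1) * ‖p - q‖ := by ring
      _ = (((k+1:ℕ):ℝ)+1) * r ^ (k+1) * ‖p - q‖ := by push_cast; ring

lemma simplexInt_congr {n : ℕ} (a b : Fin n → ℝ → ℂ) (T : ℝ)
    (hab : ∀ i, ∀ s ∈ Icc (0:ℝ) T, a i s = b i s) :
    ∀ (w : List (Fin n)) (x : ℝ), x ∈ Icc (0:ℝ) T →
      simplexInt (w.map a) x = simplexInt (w.map b) x := by
  intro w
  induction w with
  | nil => intro x _; rfl
  | cons i w ih =>
    intro x hx
    show (∫ s in (0:ℝ)..x, a i s * simplexInt (w.map a) s)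
        = ∫ s in (0:ℝ)..x, b i s * simplexInt (w.map b) s
    apply intervalIntegral.integral_congr
    intro s hs
    rw [uIcc_of_le hx.1] at hs
    have hs' : s ∈ Icc (0:ℝ) T := ⟨hs.1, hs.2.trans hx.2⟩
    show a i s * simplexInt (List.map a w) s = b i s * simplexInt (List.map b w) s
    rw [hab i s hs', ih s hs']

end UCC

set_option maxHeartbeats 2000000 in
/-- **Section 2.2.**  A universal center is a center: if all basic iterated
integrals of a tuple `a` of continuous functions vanish, then the equation `E(a)`
determines a center. -/
theorem universal_center_is_center
    (T : ℝ) (hT : 0 < T) (n : ℕ) (hn : 1 ≤ n)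
    (a : Fin n → ℝ → ℂ) (ha : ∀ i, ContinuousOn (a i) (Icc (0:ℝ) T))
    (hI : ∀ l : List (Fin n), l ≠ [] → iterInt T a l = 0) :
    DeterminesCenter T a := by
  classical
  -- continuous extension of the `a i` to all of `ℝ`
  set cl : ℝ → ℝ := fun x => max 0 (min x T) with hcldef
  have hclcont : Continuous cl := continuous_const.max (continuous_id.min continuous_const)
  have hclmem : ∀ x, cl x ∈ Icc (0:ℝ) T :=
    fun x => ⟨le_max_left _ _, max_le hT.le (min_le_right x T)⟩
  have hcleq : ∀ x ∈ Icc (0:ℝ) T, cl x = x := by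
    intro x hx
    rw [hcldef]
    simp only [min_eq_left hx.2, max_eq_right hx.1]
  set b : Fin n → ℝ → ℂ := fun i x => a i (cl x) with hbdef
  have hb : ∀ i, Continuous (b i) := fun i => (ha i).comp_continuous hclcont hclmem
  have hab : ∀ i, ∀ s ∈ Icc (0:ℝ) T, a i s = b i s := by
    intro i s hs
    show a i s = a i (cl s)
    rw [hcleq s hs]
  -- all nonempty words of `b` integrate to zero at `T`
  have hTT : T ∈ Icc (0:ℝ) T := ⟨hT.le, le_rfl⟩
  have hPT : ∀ w : List (Fin n), w ≠ [] → UCC.P b w T = 0 := by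
    intro w hw
    have h1 := hI w.reverse (by simpa using hw)
    rw [iterInt, List.map_reverse, List.reverse_reverse] at h1
    have h2 := UCC.simplexInt_congr a b T hab w T hTT
    rw [UCC.P, ← h2, h1]
  -- bound for the `b i` on `[0,T]`
  obtain ⟨C, hC⟩ : ∃ C : Fin n → ℝ, ∀ i, ∀ s ∈ Icc (0:ℝ) T, ‖b i s‖ ≤ C i := by
    have hCex : ∀ i : Fin n, ∃ Ci : ℝ, ∀ s ∈ Icc (0:ℝ) T, ‖b i s‖ ≤ Ci := fun i =>
      isCompact_Icc.exists_bound_of_continuousOn ((hb i).continuousOn)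
    choose C hC using hCex
    exact ⟨C, hC⟩
  set M : ℝ := 1 + ∑ i, |C i| with hMdef
  have hM1 : 1 ≤ M := by
    rw [hMdef]
    have : (0:ℝ) ≤ ∑ i, |C i| := Finset.sum_nonneg (fun i _ => abs_nonneg _)
    linarith
  have hM0 : 0 < M := lt_of_lt_of_le one_pos hM1
  have hMb : ∀ (i : Fin n), ∀ s ∈ Icc (0:ℝ) T, ‖b i s‖ ≤ M := by
    intro i s hs
    refine (hC i s hs).trans ((le_abs_self _).trans ?_)
    rw [hMdef]
    have := Finset.single_le_sum (f := fun j => |C j|) (fun j _ => abs_nonneg _)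
      (Finset.mem_univ i)
    linarith
  have hn1 : (1:ℝ) ≤ (n:ℝ) := by exact_mod_cast hn
  -- choice of ε
  set D : ℝ := 20 * (T+1) * M * ((n:ℝ)+2) * (n:ℝ) with hDdef
  have hD0 : 0 < D := by positivity
  set ε : ℝ := 1 / D with hεdef
  have hεpos : 0 < ε := by positivity
  have hεD : ε * D = 1 := by
    rw [hεdef]; field_simp
  have hX1 : (1:ℝ) ≤ (T+1)*M*((n:ℝ)+2)*(n:ℝ) := by
    have f1 : (1:ℝ) ≤ T+1 := by linarith
    have g2' : 1 * M ≤ (T+1) * M := mul_le_mul_of_nonneg_right f1 hM0.le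
    rw [one_mul] at g2'
    have g2 : (1:ℝ) ≤ (T+1)*M := by linarith
    have hnn2 : (1:ℝ) ≤ (n:ℝ)+2 := by linarith
    have g3' : ((T+1)*M) * 1 ≤ ((T+1)*M) * ((n:ℝ)+2) :=
      mul_le_mul_of_nonneg_left hnn2 (by linarith)
    rw [mul_one] at g3'
    have g3 : (1:ℝ) ≤ (T+1)*M*((n:ℝ)+2) := by linarith
    have g4 : ((T+1)*M*((n:ℝ)+2)) * 1 ≤ ((T+1)*M*((n:ℝ)+2)) * (n:ℝ) :=
      mul_le_mul_of_nonneg_left hn1 (by linarith)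
    rw [mul_one] at g4
    linarith
  have hD20 : (20:ℝ) ≤ D := by
    have h1 : D = 20*((T+1)*M*((n:ℝ)+2)*(n:ℝ)) := by rw [hDdef]; ring
    nlinarith
  have hε20 : ε ≤ 1/20 := by
    rw [hεdef]
    rw [div_le_div_iff₀ hD0 (by norm_num)]
    linarith
  have h2ε1 : 2*ε ≤ 1 := by linarith
  have h5ε1 : 5*ε ≤ 1 := by linarith
  have hgap1 : 4*(n:ℝ)*M*T*ε < 1 := by
    have hMn : (0:ℝ) < M*(n:ℝ) := by positivity
    have ht1 : 4*T < 20*(T+1)*((n:ℝ)+2) := by nlinarith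
    have h1 : 4*(n:ℝ)*M*T < D := by
      have := mul_lt_mul_of_pos_right ht1 hMn
      have e1 : 4*T*(M*(n:ℝ)) = 4*(n:ℝ)*M*T := by ring
      have e2 : 20*(T+1)*((n:ℝ)+2)*(M*(n:ℝ)) = D := by rw [hDdef]; ring
      linarith [this, e1 ▸ e2 ▸ this]
    calc 4*(n:ℝ)*M*T*ε < D*ε := by
          exact mul_lt_mul_of_pos_right h1 hεpos
      _ = 1 := by rw [mul_comm]; exact hεD
  have hgap2 : 10*T*(n:ℝ)*M*((n:ℝ)+2)*ε ≤ 1 := by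
    have hMn2 : (0:ℝ) ≤ M*((n:ℝ)+2)*(n:ℝ) := by positivity
    have ht2 : 10*T ≤ 20*(T+1) := by linarith
    have h1 : 10*T*(n:ℝ)*M*((n:ℝ)+2) ≤ D := by
      have := mul_le_mul_of_nonneg_right ht2 hMn2
      have e1 : 10*T*(M*((n:ℝ)+2)*(n:ℝ)) = 10*T*(n:ℝ)*M*((n:ℝ)+2) := by ring
      have e2 : 20*(T+1)*(M*((n:ℝ)+2)*(n:ℝ)) = D := by rw [hDdef]; ring
      linarith
    calc 10*T*(n:ℝ)*M*((n:ℝ)+2)*ε ≤ D*ε := mul_le_mul_of_nonneg_right h1 hεpos.le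
      _ = 1 := by rw [mul_comm]; exact hεD
  refine ⟨ε, hεpos, ?_⟩
  intro v hv hv0
  set c : ℂ := v 0 with hcdef
  set G : ℝ → ℂ := fun s => ∑ i, b i s * v s ^ ((i : ℕ) + 2) with hGdef
  have hv' : ∀ x ∈ Icc (0:ℝ) T, v x = c + ∫ s in (0:ℝ)..x, G s := by
    intro x hx
    rw [hv x hx]
    congr 1
    apply intervalIntegral.integral_congr
    intro s hs
    rw [uIcc_of_le hx.1] at hs
    have hs' : s ∈ Icc (0:ℝ) T := ⟨hs.1, hs.2.trans hx.2⟩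
    show ∑ i, a i s * v s ^ ((i : ℕ) + 2) = ∑ i, b i s * v s ^ ((i : ℕ) + 2)
    exact Finset.sum_congr rfl (fun i _ => by rw [hab i s hs'])
  by_cases hG : IntervalIntegrable G volume 0 T
  swap
  · -- junk-value case: the integral is zero
    have := hv' T hTT
    rw [intervalIntegral.integral_undef hG, add_zero] at this
    exact this
  -- main case
  have hvcont : ContinuousOn v (Icc (0:ℝ) T) := by
    have h1 : IntegrableOn G (Icc (0:ℝ) T) :=
      (intervalIntegrable_iff_integrableOn_Icc_of_le hT.le).mp hG
    have h2 : ContinuousOn (fun x => c + ∫ s in (0:ℝ)..x, G s) (Icc (0:ℝ) T) := by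
      apply continuousOn_const.add
      have := intervalIntegral.continuousOn_primitive_interval
        (a := 0) (b := T) (f := G) (μ := volume) (by rwa [uIcc_of_le hT.le])
      rwa [uIcc_of_le hT.le] at this
    exact h2.congr hv'
  -- a priori bound on `v`
  have hvbd : ∀ x ∈ Icc (0:ℝ) T, ‖v x‖ ≤ 2*ε := by
    by_contra hcon
    push_neg at hcon
    obtain ⟨x₀, hx₀, hx₀'⟩ := hcon
    set B : Set ℝ := {x | x ∈ Icc (0:ℝ) T ∧ 2*ε ≤ ‖v x‖} with hBdef
    have hBne : B.Nonempty := ⟨x₀, hx₀, hx₀'.le⟩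
    have hBclosed : IsClosed B := by
      have : B = Icc (0:ℝ) T ∩ (fun x => ‖v x‖) ⁻¹' Ici (2*ε) := by
        ext y; simp [hBdef]
      rw [this]
      exact hvcont.norm.preimage_isClosed_of_isClosed isClosed_Icc isClosed_Ici
    have hBbdd : BddBelow B := ⟨0, fun y hy => hy.1.1⟩
    set m : ℝ := sInf B with hmdef
    have hmB : m ∈ B := hBclosed.csInf_mem hBne hBbdd
    have hm0 : 0 ≤ m := hmB.1.1
    have hmT : m ≤ T := hmB.1.2
    have hlt : ∀ y, 0 ≤ y → y < m → ‖v y‖ < 2*ε := by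
      intro y h0 hym
      by_contra h
      push_neg at h
      have : y ∈ B := ⟨⟨h0, hym.le.trans hmT⟩, h⟩
      exact absurd (csInf_le hBbdd this) (not_le.mpr hym)
    set K : ℝ := (n:ℝ) * (M * (2*ε)^2) with hKdef
    have hK0 : 0 ≤ K := by positivity
    have hIbd : ‖∫ s in (0:ℝ)..m, G s‖ ≤ K * m := by
      have h1 : ∀ᵐ s ∂volume.restrict (Ι 0 m), s ∈ Ι 0 m := ae_restrict_mem measurableSet_uIoc
      have h2 : ∀ᵐ s ∂volume.restrict (Ι 0 m), s ≠ m := by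
        apply ae_restrict_of_ae
        rw [ae_iff]
        have : {s : ℝ | ¬ s ≠ m} = {m} := by ext y; simp
        rw [this]
        exact Real.volume_singleton
      have hae : ∀ᵐ s ∂volume.restrict (Ι 0 m), ‖G s‖ ≤ (fun _ => K) s := by
        filter_upwards [h1, h2] with s hs hsne
        rw [uIoc_of_le hm0] at hs
        have hsle : ‖v s‖ ≤ 2*ε := (hlt s hs.1.le (lt_of_le_of_ne hs.2 hsne)).le
        have hsIcc : s ∈ Icc (0:ℝ) T := ⟨hs.1.le, hs.2.trans hmT⟩
        rw [hGdef]
        calc ‖∑ i, b i s * v s ^ ((i:ℕ) + 2)‖ ≤ ∑ i, ‖b i s * v s ^ ((i:ℕ) + 2)‖ :=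
              norm_sum_le _ _
          _ ≤ ∑ _i : Fin n, M * (2*ε)^2 := by
              apply Finset.sum_le_sum
              intro i _
              rw [norm_mul, norm_pow]
              have hp1 : ‖v s‖ ^ ((i:ℕ)+2) ≤ (2*ε) ^ ((i:ℕ)+2) :=
                pow_le_pow_left₀ (norm_nonneg _) hsle _
              have hp2 : (2*ε) ^ ((i:ℕ)+2) ≤ (2*ε)^2 :=
                pow_le_pow_of_le_one (by positivity) h2ε1 (by omega)
              exact mul_le_mul (hMb i s hsIcc) (hp1.trans hp2) (by positivity) hM0.le
          _ = K := by
              rw [Finset.sum_const, Finset.card_univ, Fintype.card_fin, nsmul_eq_mul, hKdef]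
      have := intervalIntegral.norm_integral_le_of_norm_le hm0
        (by rw [uIoc_of_le hm0, ae_restrict_iff' measurableSet_Ioc] at hae; exact hae)
        intervalIntegrable_const
      rw [intervalIntegral.integral_const, sub_zero, smul_eq_mul] at this
      linarith [this]
    have key : ‖v m‖ < 2*ε := by
      rw [hv' m ⟨hm0, hmT⟩]
      have h1 : ‖c + ∫ s in (0:ℝ)..m, G s‖ ≤ ‖c‖ + K * m := by
        refine (norm_add_le _ _).trans ?_
        linarith [hIbd]
      have h2 : K * m ≤ K * T := mul_le_mul_of_nonneg_left hmT hK0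
      have h3 : ‖c‖ < ε := hv0
      have h4 : K * T < ε := by
        rw [hKdef]
        nlinarith [hgap1, hεpos]
      linarith
    exact absurd key (not_lt.mpr hmB.2)
  -- comparison with the Picard iterates
  have hpic : ∀ k, ∀ x ∈ Icc (0:ℝ) T, ‖v x - UCC.picard b c k x‖ ≤ 3*ε*(1/2:ℝ)^k := by
    intro k
    induction k with
    | zero =>
      intro x hx
      rw [UCC.picard_zero b c]
      have := hvbd x hx
      have h2 : ‖v x - c‖ ≤ ‖v x‖ + ‖c‖ := norm_sub_le _ _
      show ‖v x - c‖ ≤ 3*ε*(1/2:ℝ)^0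
      have h3 : ‖c‖ < ε := hv0
      simp only [pow_zero, mul_one]
      linarith
    | succ k ih =>
      intro x hx
      set p : ℝ → ℂ := UCC.picard b c k with hpdef
      have hpcont : Continuous p := UCC.picard_cont b hb c k
      set Hk : ℝ → ℂ := fun s => ∑ i, b i s * p s ^ ((i:ℕ)+2) with hHdef
      have hHcont : Continuous Hk := by
        rw [hHdef]
        exact continuous_finset_sum _ (fun i _ => (hb i).mul (hpcont.pow _))
      have hpk : ∀ s ∈ Icc (0:ℝ) T, ‖p s‖ ≤ 5*ε := by
        intro s hs
        have h1 : ‖p s‖ ≤ ‖v s‖ + ‖v s - p s‖ := by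
          have h0 := norm_sub_le (v s) (v s - p s)
          simpa using h0
        have h2 := hvbd s hs
        have h3 := ih s hs
        have h4 : (1/2:ℝ)^k ≤ 1 :=
          pow_le_one₀ (by norm_num) (by norm_num)
        nlinarith [hεpos]
      have heq : v x - UCC.picard b c (k+1) x = ∫ s in (0:ℝ)..x, (G s - Hk s) := by
        have hux : uIcc 0 x ⊆ uIcc 0 T := by
          rw [uIcc_of_le hx.1, uIcc_of_le hT.le]
          exact Icc_subset_Icc le_rfl hx.2
        have hGx : IntervalIntegrable G volume 0 x := hG.mono_set hux
        have hHx : IntervalIntegrable Hk volume 0 x := hHcont.intervalIntegrable 0 x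
        have hpick : UCC.picard b c (k+1) x = c + ∫ s in (0:ℝ)..x, Hk s := by
          rw [UCC.picard_succ b c k, hHdef, hpdef]
        calc v x - UCC.picard b c (k+1) x
            = (c + ∫ s in (0:ℝ)..x, G s) - (c + ∫ s in (0:ℝ)..x, Hk s) := by
              rw [hv' x hx, hpick]
          _ = (∫ s in (0:ℝ)..x, G s) - (∫ s in (0:ℝ)..x, Hk s) := by ring
          _ = ∫ s in (0:ℝ)..x, (G s - Hk s) := (intervalIntegral.integral_sub hGx hHx).symm
      rw [heq]
      set δ : ℝ := 3*ε*(1/2:ℝ)^k with hδdef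
      have hδ0 : 0 ≤ δ := by positivity
      set L : ℝ := (n:ℝ) * (M * (((n:ℝ)+2) * (5*ε) * δ)) with hLdef
      have hbound : ∀ s ∈ Ι 0 x, ‖G s - Hk s‖ ≤ L := by
        intro s hs
        rw [uIoc_of_le hx.1] at hs
        have hsIcc : s ∈ Icc (0:ℝ) T := ⟨hs.1.le, hs.2.trans hx.2⟩
        have hdiff : G s - Hk s = ∑ i, b i s * (v s ^ ((i:ℕ)+2) - p s ^ ((i:ℕ)+2)) := by
          rw [hGdef, hHdef]
          rw [← Finset.sum_sub_distrib]
          exact Finset.sum_congr rfl (fun i _ => by ring)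
        rw [hdiff]
        have hterm : ∀ i : Fin n, ‖b i s * (v s ^ ((i:ℕ)+2) - p s ^ ((i:ℕ)+2))‖
            ≤ M * (((n:ℝ)+2) * (5*ε) * δ) := by
          intro i
          rw [norm_mul]
          have h5 : ‖v s‖ ≤ 5*ε := (hvbd s hsIcc).trans (by linarith)
          have h6 := hpk s hsIcc
          have hpow := UCC.norm_pow_sub_pow_le' (v s) (p s) (5*ε) h5 h6 ((i:ℕ)+1)
          have hpow' : ‖v s ^ ((i:ℕ)+2) - p s ^ ((i:ℕ)+2)‖
              ≤ (((i:ℕ):ℝ)+2) * (5*ε) ^ ((i:ℕ)+1) * ‖v s - p s‖ := by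
            have : ((i:ℕ)+1) + 1 = (i:ℕ) + 2 := by omega
            rw [this] at hpow
            convert hpow using 3
            push_cast
            ring
          have hfac1 : (((i:ℕ):ℝ)+2) ≤ (n:ℝ)+2 := by
            have : ((i:ℕ):ℝ) ≤ (n:ℝ) := by
              exact_mod_cast (i.isLt.le)
            linarith
          have hfac2 : (5*ε) ^ ((i:ℕ)+1) ≤ 5*ε := by
            have := pow_le_pow_of_le_one (by positivity : (0:ℝ) ≤ 5*ε) h5ε1
              (show 1 ≤ (i:ℕ)+1 by omega)
            simpa using this
          have hfac3 : ‖v s - p s‖ ≤ δ := ih s hsIcc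
          have h7 : ‖v s ^ ((i:ℕ)+2) - p s ^ ((i:ℕ)+2)‖ ≤ ((n:ℝ)+2) * (5*ε) * δ := by
            refine hpow'.trans ?_
            have e1 : (0:ℝ) ≤ (5*ε) ^ ((i:ℕ)+1) := by positivity
            have e2 : (0:ℝ) ≤ ((i:ℕ):ℝ)+2 := by positivity
            have e3 : (0:ℝ) ≤ 5*ε := by positivity
            nlinarith [norm_nonneg (v s - p s), mul_le_mul hfac1 hfac2 e1 (by linarith),
              mul_le_mul_of_nonneg_left hfac3 (mul_nonneg (by linarith : (0:ℝ) ≤ ((n:ℝ)+2)) e3)]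
          exact mul_le_mul (hMb i s hsIcc) h7 (norm_nonneg _) hM0.le
        calc ‖∑ i, b i s * (v s ^ ((i:ℕ)+2) - p s ^ ((i:ℕ)+2))‖
            ≤ ∑ i, ‖b i s * (v s ^ ((i:ℕ)+2) - p s ^ ((i:ℕ)+2))‖ := norm_sum_le _ _
          _ ≤ ∑ _i : Fin n, M * (((n:ℝ)+2) * (5*ε) * δ) :=
              Finset.sum_le_sum (fun i _ => hterm i)
          _ = L := by
              rw [Finset.sum_const, Finset.card_univ, Fintype.card_fin, nsmul_eq_mul, hLdef]
      have hL0 : 0 ≤ L := by positivity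
      have hest := intervalIntegral.norm_integral_le_of_norm_le_const hbound
      rw [sub_zero, abs_of_nonneg hx.1] at hest
      have hLT : L * x ≤ L * T := mul_le_mul_of_nonneg_left hx.2 hL0
      have hhalf : L * T ≤ (1/2) * δ := by
        rw [hLdef]
        nlinarith [mul_le_mul_of_nonneg_right hgap2 hδ0, hδ0]
      have : (1/2) * δ = 3*ε*(1/2:ℝ)^(k+1) := by
        rw [hδdef]
        ring
      linarith
  -- pass to the limit
  have hfin : ∀ k, ‖v T - c‖ ≤ 3*ε*(1/2:ℝ)^k := by
    intro k
    have h1 := hpic k T hTT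
    rw [UCC.picard_T b hb c hPT k] at h1
    exact h1
  have htend : Tendsto (fun k : ℕ => 3*ε*(1/2:ℝ)^k) atTop (𝓝 0) := by
    have h1 := tendsto_pow_atTop_nhds_zero_of_lt_one
      (by norm_num : (0:ℝ) ≤ 1/2) (by norm_num : (1/2:ℝ) < 1)
    have := h1.const_mul (3*ε)
    simpa using this
  have hle0 : ‖v T - c‖ ≤ 0 := ge_of_tendsto' htend hfin
  have := norm_le_zero_iff.mp hle0
  exact sub_eq_zero.mp this

end
end

section
/- Let T > 0 be a real number, n ≥ 2 an integer, and q_1,…,q_n ∈ ℂ[t,t^{-1}] Laurent polynomials. Suppose that for some index i with 2 ≤ i ≤ n the largest exponent of q_i with nonzero coefficient is positive and the smallest exponent with nonzero coefficient is negative. Then the map Ã : ℂ → ℂ^n defined by Ã(z) := (z + q_1(e^{2πiz/T}), q_2(e^{2πiz/T}),…, q_n(e^{2πiz/T})) is proper; in particular its image Ã(ℂ) is a closed subset of ℂ^n. -/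
open Filter Complex

lemma zpow_le_pow_natAbs {r m : ℝ} (hr : 0 < r) (hm : 1 ≤ m) (h1 : m⁻¹ ≤ r)
    (h2 : r ≤ m) (j : ℤ) : r ^ j ≤ m ^ j.natAbs := by
  rcases le_or_gt 0 j with hj | hj
  · lift j to ℕ using hj
    simpa [zpow_natCast] using pow_le_pow_left₀ hr.le h2 j
  · have hnat : ((j.natAbs : ℤ)) = -j := by omega
    have : r ^ j = (r⁻¹) ^ (j.natAbs) := by
      rw [← zpow_natCast, hnat, zpow_neg, inv_zpow, inv_inv]
    rw [this]
    refine pow_le_pow_left₀ (by positivity) ?_ _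
    calc r⁻¹ ≤ (m⁻¹)⁻¹ := by
          exact inv_anti₀ (by positivity) h1
      _ = m := inv_inv m

lemma keyL (f : ℤ →₀ ℂ) (d : ℤ) (hd : f d ≠ 0) (hmax : ∀ j, f j ≠ 0 → j ≤ d)
    (hd0 : 0 < d) (M : ℝ) :
    ∃ B : ℝ, 1 ≤ B ∧ ∀ w : ℂ, B ≤ ‖w‖ → M ≤ ‖∑ j ∈ f.support, f j * w ^ j‖ := by
  set K : ℝ := ∑ j ∈ f.support.erase d, ‖f j‖ with hK
  have hK0 : 0 ≤ K := Finset.sum_nonneg fun _ _ => norm_nonneg _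
  have hfd : 0 < ‖f d‖ := norm_pos_iff.2 hd
  refine ⟨max 1 ((max M 0 + K + 1) / ‖f d‖), le_max_left _ _, fun w hw => ?_⟩
  have h1 : 1 ≤ ‖w‖ := le_trans (le_max_left _ _) hw
  have hw0 : ‖w‖ ≠ 0 := by positivity
  have hwne : w ≠ 0 := by simpa [norm_eq_zero] using hw0
  have hsplit : ∑ j ∈ f.support, f j * w ^ j
      = f d * w ^ d + ∑ j ∈ f.support.erase d, f j * w ^ j :=
    (Finset.add_sum_erase _ _ (Finsupp.mem_support_iff.2 hd)).symm
  set P : ℝ := ‖w‖ ^ (d - 1) with hP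
  have hP1 : 1 ≤ P := one_le_zpow₀ h1 (by omega)
  have hlead : ‖f d * w ^ d‖ = ‖f d‖ * (P * ‖w‖) := by
    rw [norm_mul, norm_zpow, hP, ← zpow_add_one₀ hw0, sub_add_cancel]
  have herase : ‖∑ j ∈ f.support.erase d, f j * w ^ j‖ ≤ K * P := by
    calc ‖∑ j ∈ f.support.erase d, f j * w ^ j‖
        ≤ ∑ j ∈ f.support.erase d, ‖f j * w ^ j‖ := norm_sum_le _ _
      _ ≤ ∑ j ∈ f.support.erase d, ‖f j‖ * P := by
          refine Finset.sum_le_sum fun j hj => ?_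
          rw [norm_mul, norm_zpow]
          have hjd : j ≤ d - 1 := by
            have := hmax j (Finsupp.mem_support_iff.1 (Finset.mem_of_mem_erase hj))
            have := Finset.ne_of_mem_erase hj
            omega
          exact mul_le_mul_of_nonneg_left (zpow_le_zpow_right₀ h1 hjd) (norm_nonneg _)
      _ = K * P := by rw [hK, Finset.sum_mul]
  have hDw : max M 0 + K + 1 ≤ ‖f d‖ * ‖w‖ := by
    have := le_trans (le_max_right 1 _) hw
    linarith [(div_le_iff₀ hfd).1 this, mul_comm ‖f d‖ ‖w‖]
  have htri : ‖f d * w ^ d‖ ≤ ‖∑ j ∈ f.support, f j * w ^ j‖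
      + ‖∑ j ∈ f.support.erase d, f j * w ^ j‖ := by
    calc ‖f d * w ^ d‖ = ‖(∑ j ∈ f.support, f j * w ^ j)
        - ∑ j ∈ f.support.erase d, f j * w ^ j‖ := by rw [hsplit]; ring_nf
      _ ≤ _ := norm_sub_le _ _
  have hM : M ≤ max M 0 := le_max_left _ _
  nlinarith [mul_le_mul_of_nonneg_right hDw (le_trans zero_le_one hP1),
    norm_nonneg (∑ j ∈ f.support, f j * w ^ j)]

lemma keyS (f : ℤ →₀ ℂ) (e : ℤ) (he : f e ≠ 0) (hmin : ∀ j, f j ≠ 0 → e ≤ j)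
    (he0 : e < 0) (M : ℝ) :
    ∃ A : ℝ, 0 < A ∧ A ≤ 1 ∧ ∀ w : ℂ, w ≠ 0 → ‖w‖ ≤ A →
      M ≤ ‖∑ j ∈ f.support, f j * w ^ j‖ := by
  set g : ℤ →₀ ℂ := Finsupp.embDomain (Equiv.neg ℤ).toEmbedding f with hg
  have hgval : ∀ j : ℤ, g (-j) = f j := fun j => by
    simpa [hg] using Finsupp.embDomain_apply_self (Equiv.neg ℤ).toEmbedding f j
  have hgd : g (-e) ≠ 0 := by rw [hgval]; exact he
  have hgmax : ∀ j, g j ≠ 0 → j ≤ -e := by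
    intro j hj
    have : g (-(-j)) ≠ 0 := by simpa using hj
    rw [hgval] at this
    have := hmin _ this; omega
  obtain ⟨B, hB1, hB⟩ := keyL g (-e) hgd hgmax (by omega) M
  refine ⟨B⁻¹, by positivity, inv_le_one_of_one_le₀ hB1, fun w hw hwA => ?_⟩
  have hkey : ∑ j ∈ f.support, f j * w ^ j = ∑ k ∈ g.support, g k * (w⁻¹) ^ k := by
    rw [hg, Finsupp.support_embDomain, Finset.sum_map]
    refine Finset.sum_congr rfl fun j _ => ?_
    have : ((Equiv.neg ℤ).toEmbedding j) = -j := rfl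
    rw [this, hgval, zpow_neg, inv_zpow, inv_inv]
  rw [hkey]
  refine hB _ ?_
  rw [norm_inv]
  have hw0 : 0 < ‖w‖ := norm_pos_iff.2 hw
  rw [le_inv_comm₀ (by positivity) hw0]
  exact hwA

/-- **Case (1) of Proposition 4.1.**  Let `q₁,…,q_n` be Laurent polynomials
(encoded by their finitely supported coefficient functions `c i : ℤ →₀ ℂ`) such
that for some `i ≠ 1` the top exponent of `q_i` is positive and the bottom
exponent is negative.  Then `Ã(z) = (z + q₁(e^{2πiz/T}), q₂(e^{2πiz/T}),…,
q_n(e^{2πiz/T})) : ℂ → ℂ^n` is proper; in particular its image is closed. -/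
theorem exp_laurent_curve_proper_and_closed
    (T : ℝ) (hT : 0 < T) (n : ℕ) (hn : 2 ≤ n)
    (c : Fin n → (ℤ →₀ ℂ))
    (hex : ∃ i : Fin n, i.val ≠ 0 ∧ ∃ d e : ℤ,
      c i d ≠ 0 ∧ (∀ j, c i j ≠ 0 → j ≤ d) ∧ 0 < d ∧
      c i e ≠ 0 ∧ (∀ j, c i j ≠ 0 → e ≤ j) ∧ e < 0) :
    (∀ K : Set (Fin n → ℂ), IsCompact K →
      IsCompact ((fun z : ℂ => fun i : Fin n =>
        (if i.val = 0 then z else 0) +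
          ∑ j ∈ (c i).support, c i j *
            Complex.exp (2 * (Real.pi : ℂ) * Complex.I * z / (T : ℂ)) ^ j) ⁻¹' K)) ∧
    IsClosed (Set.range (fun z : ℂ => fun i : Fin n =>
      (if i.val = 0 then z else 0) +
        ∑ j ∈ (c i).support, c i j *
          Complex.exp (2 * (Real.pi : ℂ) * Complex.I * z / (T : ℂ)) ^ j)) := by
  obtain ⟨i, hi0, d, e, hd, hdmax, hd0, he, hemin, he0⟩ := hex
  set E : ℂ → ℂ := fun z =>
    Complex.exp (2 * (Real.pi : ℂ) * Complex.I * z / (T : ℂ)) with hEdef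
  set F : ℂ → (Fin n → ℂ) := fun z => fun i : Fin n =>
    (if i.val = 0 then z else 0) + ∑ j ∈ (c i).support, c i j * E z ^ j with hFdef
  suffices hprop : IsProperMap F by
    exact ⟨fun K hK => hprop.isCompact_preimage hK, hprop.isClosedMap.isClosed_range⟩
  -- norm of `E z`
  set rr : ℝ := 2 * Real.pi / T with hrrdef
  have hrr : 0 < rr := by rw [hrrdef]; positivity
  have hE : ∀ z : ℂ, ‖E z‖ = Real.exp (-(rr * z.im)) := by
    intro z
    rw [hEdef]
    rw [Complex.norm_exp]
    congr 1
    have h : 2 * (Real.pi : ℂ) * Complex.I * z / (T : ℂ)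
        = ((rr : ℝ) : ℂ) * (Complex.I * z) := by
      rw [hrrdef]; push_cast; field_simp
    rw [h, Complex.re_ofReal_mul]
    simp [Complex.mul_re]
  have hEne : ∀ z : ℂ, E z ≠ 0 := fun z => Complex.exp_ne_zero _
  -- continuity
  have hcont : Continuous F := by
    rw [hFdef]
    refine continuous_pi fun i => Continuous.add ?_ ?_
    · split_ifs
      exacts [continuous_id, continuous_const]
    · refine continuous_finset_sum _ fun j _ => Continuous.mul continuous_const ?_
      refine Continuous.zpow₀ ?_ j fun z => Or.inl (Complex.exp_ne_zero _)
      exact Complex.continuous_exp.comp (by continuity)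
  rw [isProperMap_iff_tendsto_cocompact]
  refine ⟨hcont, ?_⟩
  rw [← Metric.cobounded_eq_cocompact, ← Metric.cobounded_eq_cocompact,
    ← comap_norm_atTop, ← comap_norm_atTop, Filter.tendsto_comap_iff,
    Filter.tendsto_atTop]
  intro M
  obtain ⟨B, hB1, hB⟩ := keyL (c i) d hd hdmax hd0 M
  obtain ⟨A, hA0, hA1, hA⟩ := keyS (c i) e he hemin he0 M
  have hn0 : 0 < n := by omega
  set i₀ : Fin n := ⟨0, hn0⟩ with hi₀def
  set mB : ℝ := max B A⁻¹ with hmBdef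
  have hmB1 : 1 ≤ mB := le_trans hB1 (le_max_left _ _)
  have hmB0 : 0 < mB := lt_of_lt_of_le one_pos hmB1
  set C : ℝ := ∑ j ∈ (c i₀).support, ‖c i₀ j‖ * mB ^ j.natAbs with hCdef
  have hC0 : 0 ≤ C := Finset.sum_nonneg fun j _ => by positivity
  set Y : ℝ := T / (2 * Real.pi) * Real.log mB with hYdef
  have hYrr : rr * Y = Real.log mB := by
    rw [hrrdef, hYdef]
    field_simp
  have hFi : ∀ z : ℂ, F z i = ∑ j ∈ (c i).support, c i j * E z ^ j := by
    intro z; rw [hFdef]; simp [hi0]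
  have hFi₀ : ∀ z : ℂ, F z i₀ = z + ∑ j ∈ (c i₀).support, c i₀ j * E z ^ j := by
    intro z; rw [hFdef]; simp [hi₀def]
  rw [Filter.eventually_comap]
  filter_upwards [Filter.eventually_ge_atTop (max M 0 + C)] with y hy z hz
  rcases le_or_gt z.im (-Y) with him | him
  · -- `‖E z‖ ≥ B`, coordinate `i` is large
    have hwB : B ≤ ‖E z‖ := by
      rw [hE]
      calc B ≤ mB := le_max_left _ _
        _ = Real.exp (Real.log mB) := (Real.exp_log hmB0).symm
        _ ≤ Real.exp (-(rr * z.im)) := by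
            rw [Real.exp_le_exp, ← hYrr]
            nlinarith
    calc M ≤ ‖F z i‖ := by rw [hFi]; exact hB _ hwB
      _ ≤ ‖F z‖ := norm_le_pi_norm (F z) i
  rcases le_or_gt Y z.im with him2 | him2
  · -- `‖E z‖ ≤ A`, coordinate `i` is large
    have hwA : ‖E z‖ ≤ A := by
      rw [hE]
      have h1 : A⁻¹ ≤ mB := le_max_right _ _
      have h2 : mB⁻¹ ≤ A := by
        rw [inv_le_comm₀ hmB0 hA0]
        exact h1
      calc Real.exp (-(rr * z.im)) ≤ Real.exp (-(Real.log mB)) := by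
            rw [Real.exp_le_exp, ← hYrr]
            nlinarith
        _ = mB⁻¹ := by rw [Real.exp_neg, Real.exp_log hmB0]
        _ ≤ A := h2
    calc M ≤ ‖F z i‖ := by rw [hFi]; exact hA _ (hEne z) hwA
      _ ≤ ‖F z‖ := norm_le_pi_norm (F z) i
  · -- middle strip: coordinate `0` is large
    have hEpos : 0 < ‖E z‖ := by rw [hE]; exact Real.exp_pos _
    have hw1 : ‖E z‖ ≤ mB := by
      rw [hE]
      calc Real.exp (-(rr * z.im)) ≤ Real.exp (Real.log mB) := by
            rw [Real.exp_le_exp, ← hYrr]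
            nlinarith
        _ = mB := Real.exp_log hmB0
    have hw2 : mB⁻¹ ≤ ‖E z‖ := by
      rw [hE]
      calc mB⁻¹ = Real.exp (-(Real.log mB)) := by
            rw [Real.exp_neg, Real.exp_log hmB0]
        _ ≤ Real.exp (-(rr * z.im)) := by
            rw [Real.exp_le_exp, ← hYrr]
            nlinarith
    have hQ0 : ‖∑ j ∈ (c i₀).support, c i₀ j * E z ^ j‖ ≤ C := by
      calc ‖∑ j ∈ (c i₀).support, c i₀ j * E z ^ j‖
          ≤ ∑ j ∈ (c i₀).support, ‖c i₀ j * E z ^ j‖ := norm_sum_le _ _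
        _ ≤ C := by
            rw [hCdef]
            refine Finset.sum_le_sum fun j _ => ?_
            rw [norm_mul, norm_zpow]
            exact mul_le_mul_of_nonneg_left
              (zpow_le_pow_natAbs hEpos hmB1 hw2 hw1 j) (norm_nonneg _)
    have hlow : ‖z‖ - C ≤ ‖F z i₀‖ := by
      rw [hFi₀]
      have h1 : ‖z‖ ≤ ‖z + ∑ j ∈ (c i₀).support, c i₀ j * E z ^ j‖
          + ‖∑ j ∈ (c i₀).support, c i₀ j * E z ^ j‖ := by
        calc ‖z‖ = ‖(z + ∑ j ∈ (c i₀).support, c i₀ j * E z ^ j)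
            - ∑ j ∈ (c i₀).support, c i₀ j * E z ^ j‖ := by ring_nf
          _ ≤ _ := norm_sub_le _ _
      linarith
    calc M ≤ max M 0 := le_max_left _ _
      _ ≤ ‖z‖ - C := by rw [hz]; linarith
      _ ≤ ‖F z i₀‖ := hlow
      _ ≤ ‖F z‖ := norm_le_pi_norm (F z) i₀
end

section
/- Fix a real number T > 0 and an integer n ≥ 1. Let a = (a_1,…,a_n) be a tuple of bounded measurable functions [0,T] → ℂ such that ∫_0^T a_i(s) ds = 0 for every 1 ≤ i ≤ n, and let a^{-1} be the tuple with components a_i^{-1}(t) := −a_i(T−t). Then every moment changes sign under inversion: m^{n_1,…,n_j}_{i_1,…,i_{j+1}}(a^{-1}) = −m^{n_1,…,n_j}_{i_1,…,i_{j+1}}(a) for all j ≥ 0, all positive integers n_1,…,n_j and all indices i_1,…,i_{j+1} ∈ {1,…,n}. -/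
open MeasureTheory Set

noncomputable section

/-- Concatenation `a*b` of two coefficient functions. -/
def concatF (T : ℝ) (f g : ℝ → ℂ) : ℝ → ℂ :=
  fun t => if t ≤ T / 2 then 2 * f (2 * t) else 2 * g (2 * t - T)

/-- Inverse `a^{-1}` of a coefficient function. -/
def invF (T : ℝ) (f : ℝ → ℂ) : ℝ → ℂ := fun t => -f (T - t)

lemma primitive_inv (T : ℝ) (f : ℝ → ℂ) (hf : IntegrableOn f (Icc 0 T))
    (h0 : (∫ s in (0:ℝ)..T, f s) = 0) {x : ℝ} (hx : x ∈ Icc (0:ℝ) T) :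
    primitive (invF T f) x = primitive f (T - x) := by
  obtain ⟨hx0, hxT⟩ := hx
  have hT0 : (0:ℝ) ≤ T := le_trans hx0 hxT
  have hI1 : IntervalIntegrable f volume 0 T := by
    apply IntegrableOn.intervalIntegrable
    rwa [uIcc_of_le hT0]
  have hI2 : IntervalIntegrable f volume 0 (T - x) := by
    apply IntegrableOn.intervalIntegrable
    apply hf.mono_set
    rw [uIcc_of_le (by linarith)]
    exact Icc_subset_Icc le_rfl (by linarith)
  have hsplit := intervalIntegral.integral_interval_sub_left hI1 hI2
  unfold primitive invF
  rw [intervalIntegral.integral_neg, intervalIntegral.integral_comp_sub_left f T,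
    sub_zero, ← hsplit, h0]
  ring

/-- **Section 2.3.**  If the components of `a` have zero mean on `[0,T]`, then every
moment changes sign under inversion: `m(a⁻¹) = −m(a)`. -/
theorem moment_neg_on_inv
    (T : ℝ) (hT : 0 < T) (n : ℕ) (hn : 1 ≤ n)
    (a : Fin n → ℝ → ℂ)
    (hma : ∀ i, Measurable (a i))
    (hba : ∃ C : ℝ, ∀ i, ∀ x ∈ Icc (0:ℝ) T, ‖a i x‖ ≤ C)
    (hmean : ∀ i, (∫ s in (0:ℝ)..T, a i s) = 0) :
    ∀ (ps : List (Fin n × ℕ)), (∀ q ∈ ps, 0 < q.2) → ∀ i : Fin n,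
      moment T (fun i => invF T (a i)) ps i = -moment T a ps i := by
  obtain ⟨C, hC⟩ := hba
  have hint : ∀ j : Fin n, IntegrableOn (a j) (Icc 0 T) := by
    intro j
    refine ⟨(hma j).aestronglyMeasurable.restrict, ?_⟩
    apply MeasureTheory.HasFiniteIntegral.restrict_of_bounded (C := C) measure_Icc_lt_top
    filter_upwards [ae_restrict_mem measurableSet_Icc] with x hx
    exact hC j x hx
  intro ps _ i
  unfold moment
  have congr1 : ∀ x ∈ uIcc (0:ℝ) T,
      ((ps.map fun q => primitive (invF T (a q.1)) x ^ q.2).prod * invF T (a i) x)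
        = -(((ps.map fun q => primitive (a q.1) (T - x) ^ q.2).prod) * a i (T - x)) := by
    intro x hx
    rw [uIcc_of_le hT.le] at hx
    have hprim : ∀ q ∈ ps, primitive (invF T (a q.1)) x ^ q.2
        = primitive (a q.1) (T - x) ^ q.2 := by
      intro q _
      rw [primitive_inv T (a q.1) (hint q.1) (hmean q.1) hx]
    rw [List.map_congr_left hprim]
    show _ * (-(a i (T - x))) = _
    ring
  rw [intervalIntegral.integral_congr congr1, intervalIntegral.integral_neg,
    intervalIntegral.integral_comp_sub_left
      (fun s => ((ps.map fun q => primitive (a q.1) s ^ q.2).prod) * a i s) T,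
    sub_self, sub_zero]

end
end
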